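/- Let $M$ be the square matrix indexed by even pairs $(a_1,a_2)$ in $(\mathbb{Z}/2\mathbb{Z})^g \times (\mathbb{Z}/2\mathbb{Z})^g$ (pairs with $a_1\cdot a_2=0$) with entries $(-1)^{a_1\cdot b_2 + a_2\cdot b_1} \in \mathbb{Q}$. Then $M$ is invertible, with inverse $M^{-1} = \frac{1}{2^{2g-1}}(M - 2^{g-1} I)$. -/

import Mathlib

open Finset

def dot {g : ℕ} (a b : Fin g → ZMod 2) : ZMod 2 := ∑ i, a i * b i

def sgn (x : ZMod 2) : ℚ := (-1 : ℚ) ^ x.val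

/-- The type of even pairs in `(ℤ/2ℤ)^g × (ℤ/2ℤ)^g`. -/
def EvenPair (g : ℕ) : Type :=
  { p : (Fin g → ZMod 2) × (Fin g → ZMod 2) // dot p.1 p.2 = 0 }

instance (g : ℕ) : Fintype (EvenPair g) := by unfold EvenPair; infer_instance
instance (g : ℕ) : DecidableEq (EvenPair g) := by unfold EvenPair; infer_instance

/-- The matrix with entries `(-1)^(a₁·b₂ + a₂·b₁)` indexed by even pairs. -/
def M (g : ℕ) : Matrix (EvenPair g) (EvenPair g) ℚ :=
  fun a b => sgn (dot a.1.1 b.1.2 + dot a.1.2 b.1.1)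

lemma sgn_add (x y : ZMod 2) : sgn (x + y) = sgn x * sgn y := by
  obtain rfl | rfl : x = 0 ∨ x = 1 := by revert x; decide
  all_goals obtain rfl | rfl : y = 0 ∨ y = 1 := by revert y; decide
  all_goals
    norm_num [sgn, show ZMod.val (2:ZMod 2) = 0 from rfl, show ZMod.val (1:ZMod 2) = 1 from rfl,
      show ZMod.val (0:ZMod 2) = 0 from rfl]
lemma sgn_zero : sgn 0 = 1 := by norm_num [sgn]
lemma sgn_one : sgn 1 = -1 := by norm_num [sgn]; rfl

lemma dot_comm {g : ℕ} (a b : Fin g → ZMod 2) : dot a b = dot b a := by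
  simp [dot, mul_comm]

lemma dot_add_right {g : ℕ} (a b c : Fin g → ZMod 2) :
    dot a (b + c) = dot a b + dot a c := by
  simp [dot, mul_add, Finset.sum_add_distrib]

lemma char_sum {g : ℕ} (u : Fin g → ZMod 2) :
    ∑ x : Fin g → ZMod 2, sgn (dot x u) = if u = 0 then (2:ℚ)^g else 0 := by
  split_ifs with h
  · subst h
    simp [dot, sgn, Finset.card_univ]
  · obtain ⟨i, hi⟩ : ∃ i, u i ≠ 0 := by
      by_contra h'; push_neg at h'; exact h (funext fun i => h' i)
    have hi1 : u i = 1 := by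
      have : ∀ t : ZMod 2, t ≠ 0 → t = 1 := by decide
      exact this _ hi
    have key : ∀ x : Fin g → ZMod 2,
        dot (Function.update x i (x i + 1)) u = dot x u + 1 := by
      intro x
      unfold dot
      rw [← Finset.sum_erase_add _ _ (Finset.mem_univ i),
          ← Finset.sum_erase_add _ _ (Finset.mem_univ i)]
      rw [Finset.sum_congr rfl (fun j hj => by
        rw [Function.update_of_ne (Finset.ne_of_mem_erase hj)])]
      rw [Function.update_self, hi1]
      ring
    apply Finset.sum_ninvolution (fun x => Function.update x i (x i + 1))
    · intro x
      rw [key, sgn_add, sgn_one]; ring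
    · intro x _ hc
      have := congrFun hc i
      rw [Function.update_self] at this
      simp at this
    · intro x; exact Finset.mem_univ _
    · intro x
      funext j
      by_cases hj : j = i
      · subst hj
        rw [Function.update_self, Function.update_self, add_assoc,
          show (1:ZMod 2)+1 = 0 from rfl, add_zero]
      · simp [Function.update_of_ne hj]

lemma zmod2_add_self (t : ZMod 2) : t + t = 0 := by revert t; decide
lemma zmod2_eq_of_add_eq_zero {s t : ZMod 2} (h : s + t = 0) : s = t := by revert s t; decide

lemma char_sum2 {g : ℕ} (u v : Fin g → ZMod 2) :
    ∑ c : (Fin g → ZMod 2) × (Fin g → ZMod 2),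
      (1 + sgn (dot c.1 c.2)) * sgn (dot c.1 u + dot c.2 v)
    = (if u = 0 then (2:ℚ)^g else 0) * (if v = 0 then (2:ℚ)^g else 0)
      + (2:ℚ)^g * sgn (dot v u) := by
  have e1 : ∀ c : (Fin g → ZMod 2) × (Fin g → ZMod 2),
      (1 + sgn (dot c.1 c.2)) * sgn (dot c.1 u + dot c.2 v)
      = sgn (dot c.1 u) * sgn (dot c.2 v)
        + sgn (dot c.1 u) * sgn (dot c.2 (c.1 + v)) := by
    intro c
    rw [dot_add_right c.2 c.1 v, sgn_add, sgn_add, dot_comm c.2 c.1]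
    ring
  rw [Finset.sum_congr rfl (fun c _ => e1 c), Finset.sum_add_distrib]
  congr 1
  · rw [Fintype.sum_prod_type]
    simp only
    rw [← Finset.sum_mul_sum, char_sum, char_sum]
  · rw [Fintype.sum_prod_type]
    simp only
    have e2 : ∀ x : Fin g → ZMod 2,
        ∑ y : Fin g → ZMod 2, sgn (dot x u) * sgn (dot y (x + v))
        = if x = v then sgn (dot v u) * (2:ℚ)^g else 0 := by
      intro x
      rw [← Finset.mul_sum, char_sum]
      by_cases hx : x = v
      · subst hx
        rw [if_pos (show x + x = 0 from funext fun j => zmod2_add_self (x j)), if_pos rfl]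
      · rw [if_neg (show ¬ x + v = 0 from fun hxv => hx (funext fun j => zmod2_eq_of_add_eq_zero (congrFun hxv j))),
          mul_zero, if_neg hx]
    rw [Finset.sum_congr rfl (fun x _ => e2 x), Finset.sum_ite_eq' Finset.univ v]
    simp [mul_comm]

lemma sum_evenPair {g : ℕ} (f : (Fin g → ZMod 2) × (Fin g → ZMod 2) → ℚ) :
    ∑ c : EvenPair g, f c.1 =
      (1/2) * ∑ c : (Fin g → ZMod 2) × (Fin g → ZMod 2), (1 + sgn (dot c.1 c.2)) * f c := by
  classical
  have h1 : ∑ c : EvenPair g, f c.1 =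
      ∑ c ∈ Finset.univ.filter
        (fun c : (Fin g → ZMod 2) × (Fin g → ZMod 2) => dot c.1 c.2 = 0), f c :=
    (Finset.sum_subtype _ (fun x => by simp) f).symm
  rw [h1, ← Finset.sum_filter_add_sum_filter_not Finset.univ
    (fun c : (Fin g → ZMod 2) × (Fin g → ZMod 2) => dot c.1 c.2 = 0)
    (fun c => (1 + sgn (dot c.1 c.2)) * f c)]
  have h2 : ∀ c ∈ Finset.univ.filter
      (fun c : (Fin g → ZMod 2) × (Fin g → ZMod 2) => dot c.1 c.2 = 0),
      (1 + sgn (dot c.1 c.2)) * f c = 2 * f c := by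
    intro c hc
    rw [Finset.mem_filter] at hc
    rw [hc.2, sgn_zero]; ring
  have h3 : ∀ c ∈ Finset.univ.filter
      (fun c : (Fin g → ZMod 2) × (Fin g → ZMod 2) => ¬ dot c.1 c.2 = 0),
      (1 + sgn (dot c.1 c.2)) * f c = 0 := by
    intro c hc
    rw [Finset.mem_filter] at hc
    have ht : dot c.1 c.2 = 1 := by
      have : ∀ t : ZMod 2, t ≠ 0 → t = 1 := by decide
      exact this _ hc.2
    rw [ht, sgn_one]; ring
  rw [Finset.sum_congr rfl h2, Finset.sum_congr rfl h3, Finset.sum_const_zero, add_zero,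
    ← Finset.mul_sum]
  ring

lemma M_sq (g : ℕ) (hg : 1 ≤ g) :
    M g * M g = ((2:ℚ)^(g-1)) • M g + ((2:ℚ)^(2*g-1)) • 1 := by
  ext a b
  rw [Matrix.mul_apply]
  have hterm : ∀ c : EvenPair g, M g a c * M g c b =
      sgn (dot c.1.1 (a.1.2 + b.1.2) + dot c.1.2 (a.1.1 + b.1.1)) := by
    intro c
    rw [M, M, ← sgn_add]
    congr 1
    rw [dot_add_right, dot_add_right, dot_comm c.1.1 a.1.2, dot_comm c.1.2 a.1.1]
    ring
  rw [Finset.sum_congr rfl (fun c _ => hterm c),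
    sum_evenPair (fun c => sgn (dot c.1 (a.1.2 + b.1.2) + dot c.2 (a.1.1 + b.1.1))),
    char_sum2]
  have hMab : sgn (dot (a.1.1 + b.1.1) (a.1.2 + b.1.2)) = M g a b := by
    rw [M]
    congr 1
    rw [dot_add_right, dot_comm (a.1.1 + b.1.1) a.1.2, dot_comm (a.1.1 + b.1.1) b.1.2,
      dot_add_right, dot_add_right, dot_comm a.1.2 a.1.1, dot_comm a.1.2 b.1.1,
      dot_comm b.1.2 a.1.1, dot_comm b.1.2 b.1.1, a.2, b.2, zero_add, add_zero,
      dot_comm b.1.1 a.1.2, add_comm]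
  rw [hMab, Matrix.add_apply, Matrix.smul_apply, Matrix.smul_apply, Matrix.one_apply]
  simp only [smul_eq_mul]
  have h2g : (2:ℚ)^(2*g-1) * 2 = 2^(2*g) := by rw [← pow_succ]; congr 1; omega
  have hgg : (2:ℚ)^(g-1) * 2 = 2^g := by rw [← pow_succ]; congr 1; omega
  have hD : (2:ℚ)^(2*g) = 2^g * 2^g := by rw [two_mul, pow_add]
  by_cases hab : a = b
  · subst hab
    rw [if_pos rfl,
      if_pos (show a.1.2 + a.1.2 = 0 from funext fun j => zmod2_add_self _),
      if_pos (show a.1.1 + a.1.1 = 0 from funext fun j => zmod2_add_self _)]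
    have hMaa : M g a a = 1 := by
      rw [M, dot_comm a.1.2 a.1.1, zmod2_add_self, sgn_zero]
    rw [hMaa]
    linear_combination (-(1/2:ℚ)) * h2g + (-(1/2:ℚ)) * hgg + (-(1/2:ℚ)) * hD
  · have hprod : (if (a.1.2 + b.1.2 : Fin g → ZMod 2) = 0 then (2:ℚ)^g else 0)
        * (if (a.1.1 + b.1.1 : Fin g → ZMod 2) = 0 then (2:ℚ)^g else 0) = 0 := by
      by_cases h1 : a.1.2 + b.1.2 = 0
      · by_cases h2 : a.1.1 + b.1.1 = 0
        · exact absurd (Subtype.ext (Prod.ext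
            (funext fun j => zmod2_eq_of_add_eq_zero (congrFun h2 j))
            (funext fun j => zmod2_eq_of_add_eq_zero (congrFun h1 j)))) hab
        · rw [if_neg h2, mul_zero]
      · rw [if_neg h1, zero_mul]
    rw [hprod, if_neg hab]
    linear_combination (-(M g a b)/2) * hgg

theorem stmt_4 (g : ℕ) (hg : 1 ≤ g) :
    IsUnit (M g) ∧
    (M g)⁻¹ = ((1 : ℚ) / 2 ^ (2 * g - 1)) • (M g - ((2 : ℚ) ^ (g - 1)) • 1) := by
  have key := M_sq g hg
  have hne : ((2:ℚ)^(2*g-1)) ≠ 0 := by positivity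
  have hmul : M g * (((1:ℚ)/2^(2*g-1)) • (M g - ((2:ℚ)^(g-1)) • 1)) = 1 := by
    rw [Matrix.mul_smul, Matrix.mul_sub, Matrix.mul_smul, Matrix.mul_one, key,
      add_sub_cancel_left, smul_smul, one_div, inv_mul_cancel₀ hne, one_smul]
  exact ⟨⟨⟨_, _, hmul, mul_eq_one_comm.mp hmul⟩, rfl⟩, Matrix.inv_eq_right_inv hmul⟩
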